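/- Let C > 0, α > 0, Lx > 0, Ly > 0, d > 0 be real numbers. Then (1/(Lx·Ly)) ∫₀^{Lx} ∫₀^{Ly} log₂( C · e^{−α·x} / (y² + d²) ) dy dx = log₂(C) − (α·Lx/2)·log₂(e) − [ log₂(Ly² + d²) − (2/ln 2)·(1 − (d/Ly)·arctan(Ly/d)) ]. -/

import Mathlib

open Real

lemma log_sq_antideriv (d : ℝ) (hd : 0 < d) (y : ℝ) :
    HasDerivAt (fun y : ℝ => y * Real.log (y ^ 2 + d ^ 2) - 2 * y
        + 2 * d * Real.arctan (y / d))
      (Real.log (y ^ 2 + d ^ 2)) y := by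
  have hS : (0:ℝ) < y ^ 2 + d ^ 2 := by positivity
  have hsq : HasDerivAt (fun y : ℝ => y ^ 2 + d ^ 2) (2 * y) y := by
    simpa using (hasDerivAt_pow 2 y).add_const (d ^ 2)
  have hlog : HasDerivAt (fun y : ℝ => Real.log (y ^ 2 + d ^ 2))
      ((y ^ 2 + d ^ 2)⁻¹ * (2 * y)) y :=
    by have := (Real.hasDerivAt_log hS.ne').comp y hsq; exact this
  have hdiv : HasDerivAt (fun y : ℝ => y / d) (1 / d) y := by
    simpa using (hasDerivAt_id y).div_const d
  have harc : HasDerivAt (fun y : ℝ => Real.arctan (y / d))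
      ((1 / (1 + (y / d) ^ 2)) * (1 / d)) y :=
    by have := (Real.hasDerivAt_arctan (y / d)).comp y hdiv; exact this
  have h := (((hasDerivAt_id y).mul hlog).sub
      ((hasDerivAt_id y).const_mul 2)).add (harc.const_mul (2 * d))
  refine h.congr_deriv ?_
  have h1 : 1 + (y / d) ^ 2 ≠ 0 := by positivity
  simp only [id]
  field_simp
  ring

theorem sf_pas_single_waveguide_ergodic_rate
    (C α Lx Ly d : ℝ) (hC : 0 < C) (hα : 0 < α) (hLx : 0 < Lx) (hLy : 0 < Ly)
    (hd : 0 < d) :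
    (1 / (Lx * Ly)) *
      ∫ x in (0:ℝ)..Lx, ∫ y in (0:ℝ)..Ly,
        Real.logb 2 (C * Real.exp (-α * x) / (y ^ 2 + d ^ 2))
    = Real.logb 2 C - (α * Lx / 2) * Real.logb 2 (Real.exp 1)
      - (Real.logb 2 (Ly ^ 2 + d ^ 2)
          - (2 / Real.log 2) * (1 - (d / Ly) * Real.arctan (Ly / d))) := by
  have hS : ∀ y : ℝ, (0:ℝ) < y ^ 2 + d ^ 2 := fun y => by positivity
  have hlog2 : Real.log 2 ≠ 0 := by
    have := Real.log_pos one_lt_two; linarith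
  set I : ℝ := Ly * Real.log (Ly ^ 2 + d ^ 2) - 2 * Ly + 2 * d * Real.arctan (Ly / d)
    with hIdef
  have hcont : Continuous fun y : ℝ => Real.log (y ^ 2 + d ^ 2) := by
    apply Continuous.log (by continuity) (fun y => (hS y).ne')
  have hI : ∫ y in (0:ℝ)..Ly, Real.log (y ^ 2 + d ^ 2) = I := by
    have := intervalIntegral.integral_eq_sub_of_hasDerivAt
      (f := fun y : ℝ => y * Real.log (y ^ 2 + d ^ 2) - 2 * y
        + 2 * d * Real.arctan (y / d))
      (fun y _ => log_sq_antideriv d hd y)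
      (hcont.intervalIntegrable 0 Ly)
    rw [this]
    simp [hIdef]
  have hpt : ∀ x y : ℝ, Real.logb 2 (C * Real.exp (-α * x) / (y ^ 2 + d ^ 2))
      = (Real.log C - α * x - Real.log (y ^ 2 + d ^ 2)) / Real.log 2 := by
    intro x y
    rw [Real.logb, Real.log_div (by positivity) (hS y).ne',
      Real.log_mul hC.ne' (Real.exp_ne_zero _), Real.log_exp]
    ring
  have hinner : ∀ x : ℝ,
      (∫ y in (0:ℝ)..Ly, Real.logb 2 (C * Real.exp (-α * x) / (y ^ 2 + d ^ 2)))
      = (Ly * (Real.log C - α * x) - I) / Real.log 2 := by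
    intro x
    rw [intervalIntegral.integral_congr (g := fun y =>
        (Real.log C - α * x - Real.log (y ^ 2 + d ^ 2)) / Real.log 2)
        (fun y _ => hpt x y)]
    rw [intervalIntegral.integral_div,
      intervalIntegral.integral_sub intervalIntegrable_const
        (hcont.intervalIntegrable 0 Ly),
      hI, intervalIntegral.integral_const]
    simp
    try ring
  rw [intervalIntegral.integral_congr (g := fun x =>
      (Ly * (Real.log C - α * x) - I) / Real.log 2) (fun x _ => hinner x)]
  have hcont2 : Continuous fun x : ℝ =>
      (Ly * (Real.log C - α * x) - I) / Real.log 2 := by continuity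
  have houter : (∫ x in (0:ℝ)..Lx, (Ly * (Real.log C - α * x) - I) / Real.log 2)
      = ((Ly * Real.log C - I) * Lx - Ly * α * (Lx ^ 2 / 2)) / Real.log 2 := by
    have heq : ∀ x : ℝ, (Ly * (Real.log C - α * x) - I) / Real.log 2
        = (Ly * Real.log C - I) / Real.log 2 + (-(Ly * α) / Real.log 2) * x := by
      intro x; field_simp; ring
    rw [intervalIntegral.integral_congr (fun x _ => heq x),
      intervalIntegral.integral_add intervalIntegrable_const
        ((by fun_prop : Continuous fun x : ℝ => (-(Ly * α) / Real.log 2) * x).intervalIntegrable 0 Lx),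
      intervalIntegral.integral_const, intervalIntegral.integral_const_mul,
      integral_id]
    field_simp
    have h2 : Real.log 2 * (Real.log 2)⁻¹ = 1 := mul_inv_cancel₀ hlog2
    linear_combination (Ly * Real.log C * Lx * 2 - I * Lx * 2) * h2
  rw [houter]
  have hlb : Real.logb 2 (Real.exp 1) = 1 / Real.log 2 := by
    simp [Real.logb]
  rw [hlb, Real.logb, Real.logb, hIdef]
  field_simp
  ring
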